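/- arXiv:2309.06806 — 5 statements merged into one kernel-verified Lean document; each statement's English description precedes it below -/
import Mathlib

section
/- For a prime power q and positive integers n ≥ k ≥ 1, the Gaussian binomial coefficient satisfies [n choose k]_q < q^{k(n-k)} · (1 + 2k/(q-1)). -/
noncomputable def gaussBinom (q n k : ℕ) : ℚ :=
  ∏ i ∈ Finset.range k, ((q : ℚ) ^ (n - i) - 1) / ((q : ℚ) ^ (k - i) - 1)

lemma aux_key (x : ℚ) (hx : 2 ≤ x) (k : ℕ) : x + (2 * k + 1) ≤ 2 * x ^ (k + 1) := by
  induction k with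
  | zero => simpa using by nlinarith
  | succ m ih =>
      have h1 : (1:ℚ) ≤ x ^ (m + 1) := one_le_pow₀ (by linarith)
      have : x ^ (m + 2) = x ^ (m+1) * x := by ring
      push_cast
      push_cast at ih
      nlinarith [ih, h1]

lemma prod_bound (q : ℕ) (hq : 2 ≤ q) (k : ℕ) :
    ∏ j ∈ Finset.range k, (1 + 1 / ((q : ℚ) ^ (j + 1) - 1)) ≤ 1 + 2 * k / ((q : ℚ) - 1) := by
  have hQ : (2:ℚ) ≤ (q:ℚ) := by exact_mod_cast hq
  have hq1 : (0:ℚ) < (q:ℚ) - 1 := by linarith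
  induction k with
  | zero => simp
  | succ m ih =>
      rw [Finset.prod_range_succ]
      have hpow : (1:ℚ) < (q:ℚ) ^ (m + 1) := by
        calc (1:ℚ) < 2 := by norm_num
        _ ≤ (q:ℚ) ^ (m+1) := by
            calc (2:ℚ) ≤ (q:ℚ) := hQ
            _ = (q:ℚ)^1 := (pow_one _).symm
            _ ≤ (q:ℚ)^(m+1) := pow_le_pow_right₀ (by linarith) (by omega)
      have hpos : (0:ℚ) < (q:ℚ) ^ (m+1) - 1 := by linarith
      have hterm : (0:ℚ) < 1 + 1 / ((q:ℚ) ^ (m+1) - 1) := by positivity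
      have key := aux_key (q:ℚ) hQ m
      have step : (1 + 2 * m / ((q:ℚ) - 1)) * (1 + 1 / ((q:ℚ) ^ (m+1) - 1))
          ≤ 1 + 2 * (m+1) / ((q:ℚ) - 1) := by
        have h1 : ((q:ℚ) - 1) ≠ 0 := ne_of_gt hq1
        have h2 : ((q:ℚ) ^ (m+1) - 1) ≠ 0 := ne_of_gt hpos
        rw [← sub_nonneg]
        field_simp
        nlinarith [key, hq1, hpos]
      calc (∏ j ∈ Finset.range m, (1 + 1 / ((q : ℚ) ^ (j + 1) - 1))) * (1 + 1 / ((q:ℚ) ^ (m+1) - 1))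
          ≤ (1 + 2 * m / ((q:ℚ) - 1)) * (1 + 1 / ((q:ℚ) ^ (m+1) - 1)) := by
            apply mul_le_mul_of_nonneg_right ih (le_of_lt hterm)
        _ ≤ 1 + 2 * (m+1) / ((q:ℚ) - 1) := step
        _ = 1 + 2 * (↑(m+1)) / ((q:ℚ) - 1) := by push_cast; ring

theorem stmt1 (q n k : ℕ) (hq : IsPrimePow q) (hk : 1 ≤ k) (hkn : k ≤ n) :
    gaussBinom q n k < (q : ℚ) ^ (k * (n - k)) * (1 + 2 * k / ((q : ℚ) - 1)) := by
  have hq2 : 2 ≤ q := hq.two_le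
  have hQ : (2:ℚ) ≤ (q:ℚ) := by exact_mod_cast hq2
  have hpow : ∀ m : ℕ, 1 ≤ m → (0:ℚ) < (q:ℚ) ^ m - 1 := by
    intro m hm
    have : (2:ℚ) ≤ (q:ℚ) ^ m := by
      calc (2:ℚ) ≤ (q:ℚ) := hQ
      _ = (q:ℚ)^1 := (pow_one _).symm
      _ ≤ (q:ℚ)^m := pow_le_pow_right₀ (by linarith) hm
    linarith
  set Q := (q:ℚ) with hQdef
  have hg : ∀ i ∈ Finset.range k,
      (Q ^ (n - i) - 1) / (Q ^ (k - i) - 1) < Q ^ (n - k) * (1 + 1 / (Q ^ (k - i) - 1)) := by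
    intro i hi
    rw [Finset.mem_range] at hi
    have hden : (0:ℚ) < Q ^ (k - i) - 1 := hpow _ (by omega)
    have heq : Q ^ (n - k) * (1 + 1 / (Q ^ (k - i) - 1)) = Q ^ (n - i) / (Q ^ (k - i) - 1) := by
      have h1 : Q ^ (n - k) * Q ^ (k - i) = Q ^ (n - i) := by
        rw [← pow_add]; congr 1; omega
      field_simp
      nlinarith [h1]
    rw [heq]
    apply div_lt_div_of_pos_right _ hden
    linarith
  have hne : (Finset.range k).Nonempty := Finset.nonempty_range_iff.mpr (by omega)
  have h1 : gaussBinom q n k < ∏ i ∈ Finset.range k, Q ^ (n - k) * (1 + 1 / (Q ^ (k - i) - 1)) := by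
    unfold gaussBinom
    apply Finset.prod_lt_prod_of_nonempty _ hg hne
    intro i hi
    rw [Finset.mem_range] at hi
    exact div_pos (hpow _ (by omega)) (hpow _ (by omega))
  have h3 : (∏ i ∈ Finset.range k, (1 + 1 / (Q ^ (k - i) - 1)))
      = ∏ j ∈ Finset.range k, (1 + 1 / (Q ^ (j + 1) - 1)) := by
    rw [← Finset.prod_range_reflect]
    apply Finset.prod_congr rfl
    intro i hi
    rw [Finset.mem_range] at hi
    have : k - (k - 1 - i) = i + 1 := by omega
    rw [this]
  have h2 : (∏ i ∈ Finset.range k, Q ^ (n - k) * (1 + 1 / (Q ^ (k - i) - 1)))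
      = Q ^ (k * (n - k)) * ∏ j ∈ Finset.range k, (1 + 1 / (Q ^ (j + 1) - 1)) := by
    rw [Finset.prod_mul_distrib, Finset.prod_const, Finset.card_range, ← pow_mul, Nat.mul_comm (n-k) k, h3]
  have hQpos : (0:ℚ) < Q ^ (k * (n - k)) := by positivity
  calc gaussBinom q n k < Q ^ (k * (n - k)) * ∏ j ∈ Finset.range k, (1 + 1 / (Q ^ (j + 1) - 1)) := by
        rw [← h2]; exact h1
    _ ≤ Q ^ (k * (n - k)) * (1 + 2 * k / (Q - 1)) :=
        mul_le_mul_of_nonneg_left (prod_bound q hq2 k) (le_of_lt hQpos)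
end

section
/- Let q be a prime power, k > s ≥ 1, U a k-dimensional subspace of F_q^n, and U_1 a (k-s)-dimensional subspace of U. The number of l-dimensional subspaces V of F_q^n such that V ∩ U ⊆ U_1 and dim(V ∩ U) = j equals q^{(k-j)(l-j)} · [n-k choose l-j]_q · [k-s choose j]_q. -/
/-- The Gaussian binomial coefficient `[m choose l]_q`, computed as
`((q^m-1)⋯(q^{m-l+1}-1)) / ((q^l-1)⋯(q-1))` (the division is exact). -/
def gaussBinomNat (q m l : ℕ) : ℕ :=
  (∏ i ∈ Finset.range l, (q ^ (m - i) - 1)) / (∏ i ∈ Finset.range l, (q ^ (l - i) - 1))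

open Finset Module Submodule

section Counting

/-- Generic fibration counting lemma. -/
lemma card_of_const_fibers {α β : Type*} [Finite α] [Finite β] (f : α → β) (c : ℕ)
    (h : ∀ b : β, Nat.card {a : α // f a = b} = c) :
    Nat.card α = Nat.card β * c := by
  cases nonempty_fintype α
  cases nonempty_fintype β
  classical
  rw [Nat.card_eq_fintype_card, Nat.card_eq_fintype_card,
    Fintype.card_congr (Equiv.sigmaFiberEquiv f).symm, Fintype.card_sigma]
  have : ∀ b : β, Fintype.card {a : α // f a = b} = c := by
    intro b; rw [← Nat.card_eq_fintype_card, h b]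
  simp [this, Finset.sum_const, mul_comm]

variable {F : Type*} [Field F] [Fintype F]
variable {M : Type*} [AddCommGroup M] [Module F M] [Finite M]

/-- The fiber of the quotient map over a point is equivalent to the subgroup. -/
noncomputable def mkQFiberEquiv (A : Submodule F M) (c : M ⧸ A) :
    {x : M // A.mkQ x = c} ≃ A := by
  have hx := Submodule.Quotient.mk_surjective A c
  set x₀ := hx.choose with hx₀def
  have hx₀ : Submodule.Quotient.mk x₀ = c := hx.choose_spec
  exact
    { toFun := fun x => ⟨x.1 - x₀, by
        have h0 : A.mkQ (x.1 - x₀) = 0 := by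
          rw [map_sub, x.2, ← hx₀]; simp [mkQ_apply]
        rwa [mkQ_apply, Submodule.Quotient.mk_eq_zero] at h0⟩
      invFun := fun a => ⟨x₀ + a.1, by
        rw [map_add, ← hx₀, mkQ_apply, mkQ_apply, ← Submodule.Quotient.mk_add,
          Submodule.Quotient.eq]
        simpa using a.2⟩
      left_inv := fun x => by ext; simp
      right_inv := fun a => by ext; simp }


lemma card_indep_mkQ (A : Submodule F M) (m : ℕ) (hm : m ≤ Module.finrank F (M ⧸ A)) :
    Nat.card {s : Fin m → M // LinearIndependent F (A.mkQ ∘ s)} =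
      (Fintype.card F ^ Module.finrank F A) ^ m *
        ∏ i ∈ Finset.range m,
          (Fintype.card F ^ Module.finrank F (M ⧸ A) - Fintype.card F ^ i) := by
  classical
  have hQfin : Finite (M ⧸ A) := Quotient.finite _
  let f : {s : Fin m → M // LinearIndependent F (A.mkQ ∘ s)} →
      {t : Fin m → M ⧸ A // LinearIndependent F t} := fun s => ⟨A.mkQ ∘ s.1, s.2⟩
  have hfib : ∀ t, Nat.card {a // f a = t} = (Fintype.card F ^ Module.finrank F A) ^ m := by
    intro t
    have e1 : {a // f a = t} ≃ {s : Fin m → M // A.mkQ ∘ s = t.1} :=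
      { toFun := fun a => ⟨a.1.1, congrArg Subtype.val a.2⟩
        invFun := fun s => ⟨⟨s.1, by rw [show A.mkQ ∘ s.1 = t.1 from s.2]; exact t.2⟩,
          Subtype.ext s.2⟩
        left_inv := fun a => by ext i; rfl
        right_inv := fun s => rfl }
    have e2 : {s : Fin m → M // A.mkQ ∘ s = t.1} ≃ (Fin m → A) :=
      (Equiv.subtypeEquivRight (fun s => funext_iff)).trans
        ((Equiv.subtypePiEquivPi).trans (Equiv.piCongrRight fun i => mkQFiberEquiv A (t.1 i)))
    rw [Nat.card_congr (e1.trans e2)]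
    have : Nat.card A = Fintype.card F ^ Module.finrank F A := by
      have : Fintype A := Fintype.ofFinite _
      rw [Nat.card_eq_fintype_card, card_eq_pow_finrank (K := F)]
    rw [Nat.card_pi]
    simp [this]
  rw [card_of_const_fibers f _ hfib, card_linearIndependent hm, mul_comm]
  congr 1
  rw [← Fin.prod_univ_eq_prod_range]


lemma card_subspaces_mul (A : Submodule F M) (m : ℕ) :
    Nat.card {V : Submodule F M // Module.finrank F V = m ∧ V ⊓ A = ⊥} *
        ∏ i ∈ Finset.range m, (Fintype.card F ^ m - Fintype.card F ^ i) =
      Nat.card {s : Fin m → M // LinearIndependent F (A.mkQ ∘ s)} := by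
  classical
  have hSub : Finite (Submodule F M) :=
    Finite.of_injective (fun p : Submodule F M => (p : Set M)) SetLike.coe_injective
  let f : {s : Fin m → M // LinearIndependent F (A.mkQ ∘ s)} →
      {V : Submodule F M // Module.finrank F V = m ∧ V ⊓ A = ⊥} := fun s =>
    ⟨Submodule.span F (Set.range s.1), by
      have hs : LinearIndependent F s.1 := LinearIndependent.of_comp A.mkQ s.2
      refine ⟨by simpa using finrank_span_eq_card hs, ?_⟩
      rw [eq_bot_iff]
      rintro x ⟨hx1, hx2⟩
      obtain ⟨c, hc⟩ := mem_span_range_iff_exists_fun F |>.1 hx1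
      have h0 : A.mkQ x = 0 := by
        rw [mkQ_apply, Submodule.Quotient.mk_eq_zero]; exact hx2
      have hc0 : ∀ i, c i = 0 := by
        refine Fintype.linearIndependent_iff.1 s.2 c ?_
        rw [← h0, ← hc, map_sum]
        simp [Function.comp]
      simp only [Submodule.mem_bot]
      rw [← hc]
      simp [hc0]⟩
  have hfib : ∀ b, Nat.card {a // f a = b} =
      ∏ i ∈ Finset.range m, (Fintype.card F ^ m - Fintype.card F ^ i) := by
    rintro ⟨V, hV, hVA⟩
    have hker : LinearMap.ker (A.mkQ.comp V.subtype) = ⊥ := by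
      rw [eq_bot_iff]
      rintro x hx
      simp only [LinearMap.mem_ker, LinearMap.comp_apply, mkQ_apply,
        Submodule.Quotient.mk_eq_zero] at hx
      have : (x : M) ∈ V ⊓ A := ⟨x.2, hx⟩
      rw [hVA, Submodule.mem_bot] at this
      simpa [Submodule.mem_bot] using Subtype.ext this
    have e : {a // f a = ⟨V, hV, hVA⟩} ≃ {t : Fin m → V // LinearIndependent F t} :=
      { toFun := fun a =>
          ⟨fun i => ⟨a.1.1 i, by
            have hsp : Submodule.span F (Set.range a.1.1) = V := congrArg Subtype.val a.2
            exact hsp.le (Submodule.subset_span (Set.mem_range_self i))⟩, by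
            have hs : LinearIndependent F a.1.1 := LinearIndependent.of_comp A.mkQ a.1.2
            exact LinearIndependent.of_comp V.subtype hs⟩
        invFun := fun t =>
          ⟨⟨V.subtype ∘ t.1, LinearIndependent.map' t.2 (A.mkQ.comp V.subtype) hker⟩, by
            apply Subtype.ext
            show Submodule.span F (Set.range (V.subtype ∘ t.1)) = V
            have hst : Submodule.span F (Set.range t.1) = ⊤ :=
              LinearIndependent.span_eq_top_of_card_eq_finrank' t.2 (by simp [hV])
            rw [Set.range_comp, ← Submodule.map_span, hst, Submodule.map_subtype_top]⟩
        left_inv := fun a => by apply Subtype.ext; apply Subtype.ext; rfl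
        right_inv := fun t => by apply Subtype.ext; rfl }
    rw [Nat.card_congr e, card_linearIndependent (le_of_eq hV.symm), hV]
    rw [← Fin.prod_univ_eq_prod_range]
  rw [card_of_const_fibers f _ hfib]


lemma prod_pow_sub (q e m : ℕ) (h : m ≤ e) :
    ∏ i ∈ Finset.range m, (q ^ e - q ^ i) =
      (∏ i ∈ Finset.range m, q ^ i) * ∏ i ∈ Finset.range m, (q ^ (e - i) - 1) := by
  rw [← Finset.prod_mul_distrib]
  refine Finset.prod_congr rfl fun i hi => ?_
  have hi' : i < m := Finset.mem_range.1 hi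
  rw [Nat.mul_sub, mul_one, ← pow_add]
  congr 2
  omega

lemma prod_one_lt_pos (q m : ℕ) (hq : 2 ≤ q) :
    0 < ∏ i ∈ Finset.range m, (q ^ (m - i) - 1) := by
  refine Finset.prod_pos fun i hi => ?_
  have hi' : i < m := Finset.mem_range.1 hi
  have : q ≤ q ^ (m - i) := Nat.le_self_pow (by omega) q
  omega

end Counting

section Gauss

variable {F : Type*} [Field F] [Fintype F]

lemma finrank_quot_bot {M : Type*} [AddCommGroup M] [Module F M] [Finite M] :
    Module.finrank F (M ⧸ (⊥ : Submodule F M)) = Module.finrank F M := by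
  have h := Submodule.finrank_quotient_add_finrank (⊥ : Submodule F M)
  simpa using h

lemma gauss_prod (d m : ℕ) (h : m ≤ d) :
    gaussBinomNat (Fintype.card F) d m *
        ∏ i ∈ Finset.range m, (Fintype.card F ^ (m - i) - 1) =
      ∏ i ∈ Finset.range m, (Fintype.card F ^ (d - i) - 1) := by
  classical
  set q := Fintype.card F with hqdef
  have hq : 2 ≤ q := Fintype.one_lt_card
  set M := (Fin d → F)
  have hfr : Module.finrank F M = d := by
    simp [M, Module.finrank_fintype_fun_eq_card]
  have hfrq : Module.finrank F (M ⧸ (⊥ : Submodule F M)) = d := by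
    rw [finrank_quot_bot, hfr]
  have key := (card_subspaces_mul (⊥ : Submodule F M) m).trans
    (card_indep_mkQ (⊥ : Submodule F M) m (by rw [hfrq]; exact h))
  rw [hfrq, finrank_bot] at key
  simp only [pow_zero, one_pow, one_mul] at key
  rw [prod_pow_sub q d m h, prod_pow_sub q m m le_rfl] at key
  set X := Nat.card {V : Submodule F M // Module.finrank F ↥V = m ∧ V ⊓ ⊥ = ⊥} with hX
  set P := ∏ i ∈ Finset.range m, q ^ i with hP
  have hPpos : 0 < P := Finset.prod_pos fun i _ => Nat.pow_pos (by omega)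
  have key2 : X * ∏ i ∈ Finset.range m, (q ^ (m - i) - 1) =
      ∏ i ∈ Finset.range m, (q ^ (d - i) - 1) := by
    apply Nat.eq_of_mul_eq_mul_left hPpos
    calc P * (X * ∏ i ∈ Finset.range m, (q ^ (m - i) - 1))
        = X * (P * ∏ i ∈ Finset.range m, (q ^ (m - i) - 1)) := by ring
      _ = P * ∏ i ∈ Finset.range m, (q ^ (d - i) - 1) := key
  have hgauss : gaussBinomNat q d m = X := by
    unfold gaussBinomNat
    exact Nat.div_eq_of_eq_mul_left (prod_one_lt_pos q m hq) key2.symm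
  rw [hgauss]
  exact key2

lemma card_subspaces_inf_bot {M : Type*} [AddCommGroup M] [Module F M] [Finite M]
    (A : Submodule F M) (m : ℕ) (hm : m ≤ Module.finrank F (M ⧸ A)) :
    Nat.card {V : Submodule F M // Module.finrank F V = m ∧ V ⊓ A = ⊥} =
      Fintype.card F ^ (Module.finrank F A * m) *
        gaussBinomNat (Fintype.card F) (Module.finrank F (M ⧸ A)) m := by
  classical
  set q := Fintype.card F with hqdef
  have hq : 2 ≤ q := Fintype.one_lt_card
  set d := Module.finrank F (M ⧸ A) with hd
  set a := Module.finrank F A with ha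
  have key := (card_subspaces_mul A m).trans (card_indep_mkQ A m hm)
  rw [prod_pow_sub q d m hm, prod_pow_sub q m m le_rfl] at key
  set X := Nat.card {V : Submodule F M // Module.finrank F ↥V = m ∧ V ⊓ A = ⊥} with hX
  set P := ∏ i ∈ Finset.range m, q ^ i with hP
  have hPpos : 0 < P := Finset.prod_pos fun i _ => Nat.pow_pos (by omega)
  have hprodpos : 0 < ∏ i ∈ Finset.range m, (q ^ (m - i) - 1) := prod_one_lt_pos q m hq
  rw [← gauss_prod d m hm] at key
  apply Nat.eq_of_mul_eq_mul_right (Nat.mul_pos hPpos hprodpos)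
  calc X * (P * ∏ i ∈ Finset.range m, (q ^ (m - i) - 1))
      = X * (P * ∏ i ∈ Finset.range m, (q ^ (m - i) - 1)) := rfl
    _ = (q ^ a) ^ m * (P * (gaussBinomNat q d m *
          ∏ i ∈ Finset.range m, (q ^ (m - i) - 1))) := key
    _ = q ^ (a * m) * gaussBinomNat q d m *
          (P * ∏ i ∈ Finset.range m, (q ^ (m - i) - 1)) := by rw [← pow_mul]; ring

lemma card_grassmannian {M : Type*} [AddCommGroup M] [Module F M] [Finite M]
    (m : ℕ) (hm : m ≤ Module.finrank F M) :
    Nat.card {V : Submodule F M // Module.finrank F V = m} =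
      gaussBinomNat (Fintype.card F) (Module.finrank F M) m := by
  have e : {V : Submodule F M // Module.finrank F V = m ∧ V ⊓ ⊥ = ⊥} ≃
      {V : Submodule F M // Module.finrank F V = m} :=
    Equiv.subtypeEquivRight fun V => ⟨fun h => h.1, fun h => ⟨h, by simp⟩⟩
  rw [← Nat.card_congr e, card_subspaces_inf_bot ⊥ m (by rwa [finrank_quot_bot]),
    finrank_quot_bot, finrank_bot]
  simp

end Gauss


section Fiber

variable {F : Type*} [Field F] [Fintype F]
variable {M : Type*} [AddCommGroup M] [Module F M] [Finite M]

lemma finrank_map_mkQ_add (W V : Submodule F M) (hWV : W ≤ V) :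
    Module.finrank F (Submodule.map W.mkQ V) + Module.finrank F W = Module.finrank F V := by
  have h := LinearMap.finrank_range_add_finrank_ker (W.mkQ.domRestrict V)
  rw [LinearMap.range_domRestrict] at h
  have hker : LinearMap.ker (W.mkQ.domRestrict V) = Submodule.comap V.subtype W := by
    ext x
    simp [LinearMap.mem_ker, mkQ_apply, Submodule.Quotient.mk_eq_zero]
  rw [hker] at h
  have hc : Module.finrank F (Submodule.comap V.subtype W) = Module.finrank F W := by
    rw [← Submodule.finrank_map_subtype_eq, Submodule.map_comap_subtype,
      inf_eq_right.mpr hWV]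
  rw [hc] at h
  exact h

lemma card_fiber_eq (U W : Submodule F M) (hWU : W ≤ U) (l j : ℕ)
    (hj : Module.finrank F W = j) (hjl : j ≤ l)
    (hlj : l - j ≤ Module.finrank F M - Module.finrank F U) :
    Nat.card {V : Submodule F M // Module.finrank F V = l ∧ V ⊓ U = W} =
      Fintype.card F ^ ((Module.finrank F U - j) * (l - j)) *
        gaussBinomNat (Fintype.card F) (Module.finrank F M - Module.finrank F U) (l - j) := by
  classical
  have hQfin : Finite (M ⧸ W) := Quotient.finite _
  set Abar : Submodule F (M ⧸ W) := Submodule.map W.mkQ U with hAbar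
  have hjU : j ≤ Module.finrank F U := hj ▸ Submodule.finrank_mono hWU
  have hjM : j ≤ Module.finrank F M := hj ▸ (W.finrank_le)
  have hUM : Module.finrank F U ≤ Module.finrank F M := U.finrank_le
  have hfrQ : Module.finrank F (M ⧸ W) = Module.finrank F M - j := by
    have h := Submodule.finrank_quotient_add_finrank W
    omega
  have hfrA : Module.finrank F Abar = Module.finrank F U - j := by
    have h := finrank_map_mkQ_add W U hWU
    rw [hj, ← hAbar] at h
    omega
  have hfrQA : Module.finrank F ((M ⧸ W) ⧸ Abar) =
      Module.finrank F M - Module.finrank F U := by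
    have h := Submodule.finrank_quotient_add_finrank Abar
    rw [hfrA, hfrQ] at h
    omega
  have e : {V : Submodule F M // Module.finrank F V = l ∧ V ⊓ U = W} ≃
      {V' : Submodule F (M ⧸ W) // Module.finrank F V' = l - j ∧ V' ⊓ Abar = ⊥} :=
    { toFun := fun V => by
        refine ⟨Submodule.map W.mkQ V.1, ?_, ?_⟩
        · have hWV : W ≤ V.1 := V.2.2.symm.trans_le inf_le_left
          have h := finrank_map_mkQ_add W V.1 hWV
          rw [hj, V.2.1] at h
          omega
        · rw [eq_bot_iff]
          rintro x ⟨hx1, hx2⟩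
          obtain ⟨v, hv, hvx⟩ := hx1
          obtain ⟨u, hu, hux⟩ := hx2
          have hvu : v - u ∈ W := by
            rw [← Submodule.Quotient.eq]
            show W.mkQ v = W.mkQ u
            rw [hvx, hux]
          have hvU : v ∈ U := by
            have := sub_add_cancel v u
            rw [← this]
            exact U.add_mem (hWU hvu) hu
          have hvW : v ∈ W := by
            rw [← V.2.2]; exact ⟨hv, hvU⟩
          have hπv : W.mkQ v = 0 := by
            rw [mkQ_apply, Submodule.Quotient.mk_eq_zero]; exact hvW
          rw [Submodule.mem_bot, ← hvx, hπv]
      invFun := fun V' => by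
        refine ⟨Submodule.comap W.mkQ V'.1, ?_, ?_⟩
        · have hWle : W ≤ Submodule.comap W.mkQ V'.1 := by
            intro x hx
            have : W.mkQ x = 0 := by
              rw [mkQ_apply, Submodule.Quotient.mk_eq_zero]; exact hx
            simp [Submodule.mem_comap, this]
          have hmapc : Submodule.map W.mkQ (Submodule.comap W.mkQ V'.1) = V'.1 := by
            rw [Submodule.map_comap_eq, Submodule.range_mkQ, top_inf_eq]
          have h := finrank_map_mkQ_add W (Submodule.comap W.mkQ V'.1) hWle
          rw [hmapc, hj, V'.2.1] at h
          omega
        · apply le_antisymm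
          · intro x hx
            obtain ⟨hx1, hx2⟩ := hx
            have hπx : W.mkQ x ∈ V'.1 ⊓ Abar := ⟨hx1, Submodule.mem_map_of_mem hx2⟩
            rw [V'.2.2, Submodule.mem_bot] at hπx
            rwa [mkQ_apply, Submodule.Quotient.mk_eq_zero] at hπx
          · exact le_inf (fun x hx => by
              have : W.mkQ x = 0 := by
                rw [mkQ_apply, Submodule.Quotient.mk_eq_zero]; exact hx
              simp [Submodule.mem_comap, this]) hWU
      left_inv := fun V => by
        apply Subtype.ext
        show Submodule.comap W.mkQ (Submodule.map W.mkQ V.1) = V.1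
        have hWV : W ≤ V.1 := V.2.2.symm.trans_le inf_le_left
        rw [Submodule.comap_map_mkQ, sup_eq_right.mpr hWV]
      right_inv := fun V' => by
        apply Subtype.ext
        show Submodule.map W.mkQ (Submodule.comap W.mkQ V'.1) = V'.1
        rw [Submodule.map_comap_eq, Submodule.range_mkQ, top_inf_eq] }
  rw [Nat.card_congr e, card_subspaces_inf_bot Abar (l - j) (by rw [hfrQA]; exact hlj),
    hfrA, hfrQA]

end Fiber

theorem stmt5 (q n k s l j : ℕ) (F : Type*) [Field F] [Fintype F]
    (hq : IsPrimePow q) (hF : Fintype.card F = q)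
    (hs : 1 ≤ s) (hsk : s < k)
    (U U₁ : Submodule F (Fin n → F)) (hU : Module.finrank F U = k)
    (hU₁U : U₁ ≤ U) (hU₁ : Module.finrank F U₁ = k - s)
    (hjl : j ≤ l) (hjks : j ≤ k - s) (hlj : l - j ≤ n - k) :
    Set.ncard {V : Submodule F (Fin n → F) |
        Module.finrank F V = l ∧ V ⊓ U ≤ U₁ ∧ Module.finrank F (V ⊓ U : Submodule F (Fin n → F)) = j} =
      q ^ ((k - j) * (l - j)) * gaussBinomNat q (n - k) (l - j) * gaussBinomNat q (k - s) j := by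
  classical
  subst hF
  set E := (Fin n → F)
  have hfrE : Module.finrank F E = n := by
    simp [E, Module.finrank_fintype_fun_eq_card]
  have hSub : Finite (Submodule F E) :=
    Finite.of_injective (fun p : Submodule F E => (p : Set E)) SetLike.coe_injective
  set S := {V : Submodule F E |
      Module.finrank F V = l ∧ V ⊓ U ≤ U₁ ∧
        Module.finrank F (V ⊓ U : Submodule F E) = j} with hS
  let B := {W : Submodule F E // W ≤ U₁ ∧ Module.finrank F W = j}
  let f : {V : Submodule F E // V ∈ S} → B := fun V => ⟨V.1 ⊓ U, V.2.2.1, V.2.2.2⟩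
  have hfib : ∀ b : B, Nat.card {a // f a = b} =
      Fintype.card F ^ ((k - j) * (l - j)) *
        gaussBinomNat (Fintype.card F) (n - k) (l - j) := by
    rintro ⟨W, hWU₁, hWj⟩
    have e : {a // f a = ⟨W, hWU₁, hWj⟩} ≃
        {V : Submodule F E // Module.finrank F V = l ∧ V ⊓ U = W} :=
      { toFun := fun a => ⟨a.1.1, a.1.2.1, congrArg Subtype.val a.2⟩
        invFun := fun V => ⟨⟨V.1, V.2.1, by rw [V.2.2]; exact hWU₁, by rw [V.2.2, hWj]⟩,
          Subtype.ext V.2.2⟩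
        left_inv := fun a => by apply Subtype.ext; apply Subtype.ext; rfl
        right_inv := fun V => rfl }
    rw [Nat.card_congr e,
      card_fiber_eq U W (le_trans hWU₁ hU₁U) l j hWj hjl (by rw [hfrE, hU]; exact hlj),
      hU, hfrE]
  have hbase : Nat.card B = gaussBinomNat (Fintype.card F) (k - s) j := by
    have e : {W' : Submodule F U₁ // Module.finrank F W' = j} ≃ B :=
      { toFun := fun W' => ⟨Submodule.map U₁.subtype W'.1, Submodule.map_subtype_le _ _,
          by rw [Submodule.finrank_map_subtype_eq]; exact W'.2⟩
        invFun := fun W => ⟨Submodule.comap U₁.subtype W.1, by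
          rw [← Submodule.finrank_map_subtype_eq, Submodule.map_comap_subtype,
            inf_eq_right.mpr W.2.1]
          exact W.2.2⟩
        left_inv := fun W' => by
          apply Subtype.ext
          exact Submodule.comap_map_eq_of_injective (Submodule.injective_subtype U₁) W'.1
        right_inv := fun W => by
          apply Subtype.ext
          show Submodule.map U₁.subtype (Submodule.comap U₁.subtype W.1) = W.1
          rw [Submodule.map_comap_subtype, inf_eq_right.mpr W.2.1] }
    rw [← Nat.card_congr e, card_grassmannian j (by rw [hU₁]; exact hjks), hU₁]
  have htot := card_of_const_fibers f _ hfib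
  rw [← Nat.card_coe_set_eq, htot, hbase]
  ring
end

section
/- Let n, u, v be positive integers with uv ≤ n. Then S(n,u,v) ≤ ⌊ ln C(n,uv) / (−ln(1 − ∏_{i=1}^{v} C((v−i+1)u, u)/v^u)) ⌋ + 1, where S(n,u,v) is the minimum number of v-partitions of [n] needed so that every uv-subset of [n] is covered by at least one of them. -/
/-- A `v`-partition of `[n]`, viewed as a function `x : Fin n → Fin v` (parts may be empty),
covers a `uv`-subset `I` if each part meets `I` in exactly `u` elements. -/
def Covers {n v : ℕ} (u : ℕ) (x : Fin n → Fin v) (I : Finset (Fin n)) : Prop :=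
  ∀ i : Fin v, (I.filter fun j => x j = i).card = u

/-- `S n u v`: the minimum number of `v`-partitions of `[n]` needed so that every
`uv`-subset of `[n]` is covered by at least one of them. -/
noncomputable def Spart (n u v : ℕ) : ℕ :=
  sInf {m : ℕ | ∃ P : Finset (Fin n → Fin v), P.card = m ∧
    ∀ I : Finset (Fin n), I.card = u * v → ∃ x ∈ P, Covers u x I}


open Finset

/-- Number of balanced functions from a fintype of card `u*v` to `Fin v`. -/
lemma bal_card (u : ℕ) : ∀ (v : ℕ) (α : Type) [Fintype α] [DecidableEq α],
    Fintype.card α = u * v →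
    Fintype.card {f : α → Fin v // ∀ i, (Finset.univ.filter fun a => f a = i).card = u}
      = ∏ i ∈ Finset.range v, ((v - i) * u).choose u := by
  intro v
  induction v with
  | zero =>
    intro α _ _ h
    simp only [Nat.mul_zero, Fintype.card_eq_zero_iff] at h
    rw [Finset.range_zero, Finset.prod_empty]
    have : ∀ f : α → Fin 0, ∀ i : Fin 0, (Finset.univ.filter fun a => f a = i).card = u :=
      fun f i => i.elim0
    rw [Fintype.card_eq_one_iff]
    refine ⟨⟨fun a => (h.false a).elim, this _⟩, ?_⟩
    rintro ⟨g, hg⟩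
    ext a
    exact (h.false a).elim
  | succ v ih =>
    intro α _ _ h
    classical
    set G' := ∏ i ∈ Finset.range v, ((v - i) * u).choose u with hG'
    -- fiberwise count over the fiber of `Fin.last v`
    set S : Finset (α → Fin (v+1)) :=
      univ.filter (fun f => ∀ i, (Finset.univ.filter fun a => f a = i).card = u) with hS
    have hmaps : ∀ f ∈ S, (univ.filter fun a => f a = Fin.last v) ∈ powersetCard u (univ : Finset α) := by
      intro f hf
      rw [mem_powersetCard]
      exact ⟨subset_univ _, (mem_filter.mp hf).2 (Fin.last v)⟩
    have hsum := Finset.card_eq_sum_card_fiberwise hmaps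
    have hfiber : ∀ T ∈ powersetCard u (univ : Finset α),
        (S.filter fun f => (univ.filter fun a => f a = Fin.last v) = T).card = G' := by
      intro T hT
      rw [mem_powersetCard] at hT
      have hcompl : Fintype.card {a : α // a ∉ T} = u * v := by
        have h1 : Fintype.card {a : α // a ∈ T} = T.card := Fintype.card_coe T
        have h2 : Fintype.card {a : α // a ∉ T}
            = Fintype.card α - Fintype.card {a : α // a ∈ T} :=
          Fintype.card_subtype_compl _
        rw [h2, h1, hT.2, h, Nat.mul_succ]
        exact Nat.add_sub_cancel ..
      have := ih {a : α // a ∉ T} hcompl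
      rw [Fintype.card_subtype] at this
      rw [← this]
      -- bijection
      refine Finset.card_bij' (fun f hf => fun b => (f b.1).castPred (by
          simp only [mem_filter, hS] at hf
          intro hlast
          have hb : b.1 ∈ univ.filter (fun a => f a = Fin.last v) := by
            simp only [mem_filter, mem_univ, true_and]; exact hlast
          rw [hf.2] at hb
          exact b.2 hb))
        (fun g _ => fun a => if h : a ∈ T then Fin.last v else (g ⟨a, h⟩).castSucc)
        ?_ ?_ ?_ ?_
      · -- maps into balanced g's
        intro f hf
        simp only [mem_filter, mem_univ, true_and]
        intro j
        simp only [mem_filter, hS, mem_univ, true_and] at hf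
        have := hf.1 j.castSucc
        refine Eq.trans ?_ this
        -- card of subtype filter = card of α filter
        refine Finset.card_bij' (fun b _ => b.1) (fun a ha => ⟨a, ?_⟩) ?_ ?_ ?_ ?_
        · -- a ∉ T
          simp only [mem_filter, mem_univ, true_and] at ha
          intro haT
          have : f a = Fin.last v := by rw [← hf.2] at haT; simpa using haT
          rw [this] at ha
          exact (Fin.castSucc_lt_last j).ne' ha
        · intro b hb
          simp only [mem_filter, mem_univ, true_and] at hb ⊢
          rw [← hb]
          exact (Fin.castSucc_castPred _ _).symm
        · intro a ha
          simp only [mem_filter, mem_univ, true_and] at ha ⊢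
          rw [Fin.castPred_eq_iff_eq_castSucc]
          exact ha
        · intro b _; rfl
        · intro a _; rfl
      · -- j maps into S-fiber
        intro g hg
        simp only [mem_filter, mem_univ, true_and, hS] at hg ⊢
        have hfib : (univ.filter fun a => (if h : a ∈ T then Fin.last v else ((g ⟨a, h⟩).castSucc : Fin (v+1))) = Fin.last v) = T := by
          ext a
          simp only [mem_filter, mem_univ, true_and]
          by_cases haT : a ∈ T
          · simp [haT]
          · simp only [dif_neg haT, haT, iff_false]
            exact (Fin.castSucc_lt_last _).ne
        refine ⟨?_, hfib⟩
        · intro i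
          induction i using Fin.lastCases with
          | last => rw [hfib]; exact hT.2
          | cast j =>
            rw [← hg j]
            refine Finset.card_bij' (fun a ha => (⟨a, ?_⟩ : {a : α // a ∉ T})) (fun b _ => b.1) ?_ ?_ ?_ ?_
            · simp only [mem_filter, mem_univ, true_and] at ha
              intro haT
              rw [dif_pos haT] at ha
              exact (Fin.castSucc_lt_last j).ne' ha
            · intro a ha
              simp only [mem_filter, mem_univ, true_and] at ha ⊢
              by_cases haT : a ∈ T
              · rw [dif_pos haT] at ha
                exact absurd ha.symm (Fin.castSucc_lt_last j).ne
              · rw [dif_neg haT] at ha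
                exact Fin.castSucc_injective _ ha
            · intro b hb
              simp only [mem_filter, mem_univ, true_and] at hb ⊢
              rw [dif_neg b.2, hb]
            · intro a _; rfl
            · intro b _; rfl
      · -- left inverse
        intro f hf
        funext a
        simp only [mem_filter, hS] at hf
        by_cases haT : a ∈ T
        · simp only [dif_pos haT]
          have h5 : a ∈ univ.filter fun a => f a = Fin.last v := by rw [hf.2]; exact haT
          simp only [mem_filter, mem_univ, true_and] at h5
          exact h5.symm
        · simp only [dif_neg haT]
          exact Fin.castSucc_castPred _ _
      · -- right inverse
        intro g hg
        funext b
        have : (if h : b.1 ∈ T then Fin.last v else ((g ⟨b.1, h⟩).castSucc : Fin (v+1))) = (g b).castSucc := by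
          rw [dif_neg b.2]
        simp only [this]
        exact Fin.castPred_castSucc _
    -- sum it up
    have : ∑ T ∈ powersetCard u (univ : Finset α), (S.filter fun f => (univ.filter fun a => f a = Fin.last v) = T).card
        = (powersetCard u (univ : Finset α)).card * G' := by
      rw [Finset.sum_congr rfl hfiber, Finset.sum_const, smul_eq_mul]
    rw [Fintype.card_subtype, ← hS, hsum, this, Finset.card_powersetCard, Finset.card_univ, h,
      Finset.prod_range_succ']
    simp only [Nat.succ_sub_succ_eq_sub, Nat.sub_zero, hG']
    rw [Nat.mul_comm u (v + 1)]
    exact Nat.mul_comm _ _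


lemma filter_subtype_card {γ : Type} [DecidableEq γ] (s : Finset γ) (p : γ → Prop) [DecidablePred p] :
    ((Finset.univ : Finset {a // a ∈ s}).filter fun b => p b.1).card = (s.filter p).card := by
  rw [Finset.univ_eq_attach, Finset.filter_attach, Finset.card_map, Finset.card_attach]

instance {n v : ℕ} (u : ℕ) (x : Fin n → Fin v) (I : Finset (Fin n)) :
    Decidable (Covers u x I) := by
  unfold Covers; infer_instance

lemma cover_card (n u v : ℕ) (I : Finset (Fin n)) (hI : I.card = u * v) :
    (Finset.univ.filter fun x : Fin n → Fin v => Covers u x I).card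
      = (∏ i ∈ Finset.range v, ((v - i) * u).choose u) * v ^ (n - u * v) := by
  classical
  set t : Finset (({a // a ∈ I} → Fin v) × ({a : Fin n // a ∉ I} → Fin v)) :=
    univ.filter (fun p => ∀ i, (univ.filter fun b => p.1 b = i).card = u) with ht
  have hcard1 : (univ.filter fun x : Fin n → Fin v => Covers u x I).card = t.card := by
    refine Finset.card_bij' (fun x _ => (fun b => x b.1, fun a => x a.1))
      (fun p _ => fun a => if h : a ∈ I then p.1 ⟨a, h⟩ else p.2 ⟨a, h⟩) ?_ ?_ ?_ ?_
    · intro x hx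
      simp only [mem_filter, mem_univ, true_and, ht] at hx ⊢
      intro i
      rw [filter_subtype_card I (fun a => x a = i)]
      exact hx i
    · intro p hp
      simp only [mem_filter, mem_univ, true_and, ht] at hp ⊢
      intro i
      rw [← filter_subtype_card I]
      have : (univ.filter fun (b : {a // a ∈ I}) =>
            (if h : b.1 ∈ I then p.1 ⟨b.1, h⟩ else p.2 ⟨b.1, h⟩) = i)
          = univ.filter fun b => p.1 b = i := by
        apply Finset.filter_congr
        intro b _
        simp [dif_pos b.2]
      rw [this]
      exact hp i
    · intro x _
      funext a
      by_cases h : a ∈ I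
      · simp only [dif_pos h]
      · simp only [dif_neg h]
    · intro p _
      refine Prod.ext ?_ ?_
      · funext b; simp only [dif_pos b.2]
      · funext a; simp only [dif_neg a.2]
  have hIcard : Fintype.card {a // a ∈ I} = u * v := by
    rw [Fintype.card_coe, hI]
  have hbal := bal_card u v {a // a ∈ I} hIcard
  rw [Fintype.card_subtype] at hbal
  have hsplit : t = (univ.filter fun g : {a // a ∈ I} → Fin v =>
      ∀ i, (univ.filter fun b => g b = i).card = u) ×ˢ univ := by
    ext p
    simp only [ht, mem_filter, mem_univ, true_and, Finset.mem_product, and_true]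
  have hcompl : Fintype.card ({a : Fin n // a ∉ I} → Fin v) = v ^ (n - u * v) := by
    rw [Fintype.card_fun]
    congr 1
    · exact Fintype.card_fin v
    have h2 : Fintype.card {a : Fin n // a ∉ I}
        = Fintype.card (Fin n) - Fintype.card {a : Fin n // a ∈ I} :=
      Fintype.card_subtype_compl _
    rw [h2, hIcard, Fintype.card_fin]
  rw [hcard1, hsplit, Finset.card_product, hbal, Finset.card_univ, hcompl]

lemma not_cover_card (n u v : ℕ) (I : Finset (Fin n)) (hI : I.card = u * v) (huv : u * v ≤ n) :
    (Finset.univ.filter fun x : Fin n → Fin v => ¬ Covers u x I).card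
      = v ^ n - (∏ i ∈ Finset.range v, ((v - i) * u).choose u) * v ^ (n - u * v) := by
  classical
  have htot := Finset.card_filter_add_card_filter_not
    (s := (univ : Finset (Fin n → Fin v))) (p := fun x => Covers u x I)
  rw [Finset.card_univ, Fintype.card_fun, Fintype.card_fin, Fintype.card_fin] at htot
  rw [cover_card n u v I hI] at htot
  omega

lemma exists_tuple (n u v m : ℕ)
    (hm : (n.choose (u * v)) *
        (v ^ n - (∏ i ∈ Finset.range v, ((v - i) * u).choose u) * v ^ (n - u * v)) ^ m
      < (v ^ n) ^ m) (huv : u * v ≤ n) :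
    ∃ t : Fin m → (Fin n → Fin v), ∀ I : Finset (Fin n), I.card = u * v →
      ∃ j, Covers u (t j) I := by
  classical
  by_contra hc
  push_neg at hc
  set B := v ^ n - (∏ i ∈ Finset.range v, ((v - i) * u).choose u) * v ^ (n - u * v) with hB
  have hall : (univ : Finset (Fin m → (Fin n → Fin v))) ⊆
      (powersetCard (u * v) univ).biUnion
        (fun I => univ.filter fun t => ∀ j, ¬ Covers u (t j) I) := by
    intro t _
    obtain ⟨I, hI, hbad⟩ := hc t
    refine Finset.mem_biUnion.mpr ⟨I, ?_, ?_⟩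
    · rw [mem_powersetCard]; exact ⟨subset_univ _, hI⟩
    · simp only [mem_filter, mem_univ, true_and]; exact hbad
  have h1 : ((univ : Finset (Fin m → (Fin n → Fin v)))).card ≤
      ∑ I ∈ powersetCard (u * v) (univ : Finset (Fin n)),
        (univ.filter fun t : Fin m → Fin n → Fin v => ∀ j, ¬ Covers u (t j) I).card :=
    le_trans (Finset.card_le_card hall) Finset.card_biUnion_le
  have h2 : ∀ I ∈ powersetCard (u * v) (univ : Finset (Fin n)),
      (univ.filter fun t : Fin m → Fin n → Fin v => ∀ j, ¬ Covers u (t j) I).card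
        = B ^ m := by
    intro I hI
    rw [mem_powersetCard] at hI
    rw [← Fintype.card_subtype]
    have e := Equiv.subtypePiEquivPi
      (β := fun _ : Fin m => Fin n → Fin v) (p := fun _ x => ¬ Covers u x I)
    rw [Fintype.card_congr e, Fintype.card_pi]
    have hc1 : ∀ j : Fin m, Fintype.card {x : Fin n → Fin v // ¬ Covers u x I} = B := by
      intro j
      rw [Fintype.card_subtype, not_cover_card n u v I hI.2 huv]
    rw [Finset.prod_congr rfl (fun j _ => hc1 j), Finset.prod_const, Finset.card_univ,
      Fintype.card_fin]
  have h3 : ∑ I ∈ powersetCard (u * v) (univ : Finset (Fin n)),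
      (univ.filter fun t : Fin m → Fin n → Fin v => ∀ j, ¬ Covers u (t j) I).card
      = (n.choose (u * v)) * B ^ m := by
    rw [Finset.sum_congr rfl h2, Finset.sum_const, smul_eq_mul,
      Finset.card_powersetCard, Finset.card_univ, Fintype.card_fin]
  rw [h3, Finset.card_univ, Fintype.card_fun, Fintype.card_fun, Fintype.card_fin,
    Fintype.card_fin, Fintype.card_fin] at h1
  exact absurd h1 (Nat.not_le.mpr hm)

theorem stmt9 (n u v : ℕ) (hu : 1 ≤ u) (hv : 1 ≤ v) (huv : u * v ≤ n) :
    Spart n u v ≤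
      ⌊Real.log (n.choose (u * v)) /
          (-Real.log (1 - ∏ i ∈ Finset.range v, (((v - i) * u).choose u : ℝ) / (v : ℝ) ^ u))⌋₊ + 1 := by
  classical
  have hSpart_le : ∀ m : ℕ,
      (∃ t : Fin m → (Fin n → Fin v), ∀ I : Finset (Fin n), I.card = u * v →
        ∃ j, Covers u (t j) I) → Spart n u v ≤ m := by
    rintro m ⟨t, ht⟩
    have hmem : (Finset.image t Finset.univ).card ∈ {m : ℕ | ∃ P : Finset (Fin n → Fin v),
        P.card = m ∧ ∀ I : Finset (Fin n), I.card = u * v → ∃ x ∈ P, Covers u x I} := by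
      refine ⟨Finset.image t Finset.univ, rfl, fun I hI => ?_⟩
      obtain ⟨j, hj⟩ := ht I hI
      exact ⟨t j, Finset.mem_image_of_mem t (Finset.mem_univ j), hj⟩
    refine le_trans (Nat.sInf_le hmem) (le_trans Finset.card_image_le ?_)
    simp
  rcases eq_or_lt_of_le hv with hv1 | hv2
  · -- v = 1 : every partition covers everything
    subst hv1
    refine le_trans (hSpart_le 1 ⟨fun _ _ => 0, fun I hI => ⟨0, fun i => ?_⟩⟩)
      (Nat.le_add_left 1 _)
    have : (I.filter fun j => (0 : Fin 1) = i) = I :=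
      Finset.filter_true_of_mem (fun j _ => Subsingleton.elim _ _)
    rw [this, hI, Nat.mul_one]
  -- now 2 ≤ v
  set G := ∏ i ∈ Finset.range v, ((v - i) * u).choose u with hG
  have hGpos : 0 < G := by
    refine Finset.prod_pos fun i hi => Nat.choose_pos ?_
    rw [Finset.mem_range] at hi
    calc u = 1 * u := (Nat.one_mul u).symm
    _ ≤ (v - i) * u := Nat.mul_le_mul_right u (by omega)
  have hGlt : G < v ^ (u * v) := by
    have hbal := bal_card u v (Fin (u * v)) (by rw [Fintype.card_fin])
    rw [Fintype.card_subtype] at hbal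
    rw [hG, ← hbal]
    have hne : (Finset.univ.filter fun f : Fin (u * v) → Fin v =>
        ∀ i, (Finset.univ.filter fun a => f a = i).card = u) ≠ Finset.univ := by
      intro hEq
      have h0 : (fun _ : Fin (u * v) => (⟨0, Nat.lt_of_lt_of_le Nat.zero_lt_one hv⟩ : Fin v)) ∈
          (Finset.univ : Finset (Fin (u*v) → Fin v)) :=
        Finset.mem_univ _
      rw [← hEq, Finset.mem_filter] at h0
      have := h0.2 ⟨1, hv2⟩
      have hemp : (Finset.univ.filter fun a : Fin (u * v) =>
          (⟨0, Nat.lt_of_lt_of_le Nat.zero_lt_one hv⟩ : Fin v) = (⟨1, hv2⟩ : Fin v)) = ∅ := by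
        refine Finset.filter_false_of_mem fun a _ => ?_
        intro hcon
        have := congrArg Fin.val hcon
        simp at this
      rw [hemp, Finset.card_empty] at this
      rw [← this] at hu
      exact absurd hu (by norm_num)
    calc (Finset.univ.filter fun f : Fin (u * v) → Fin v =>
          ∀ i, (Finset.univ.filter fun a => f a = i).card = u).card
        < (Finset.univ : Finset (Fin (u*v) → Fin v)).card :=
          Finset.card_lt_card (Finset.ssubset_iff_subset_ne.mpr ⟨Finset.filter_subset _ _, hne⟩)
      _ = v ^ (u * v) := by rw [Finset.card_univ, Fintype.card_fun, Fintype.card_fin, Fintype.card_fin]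
  -- real quantities
  set p : ℝ := ∏ i ∈ Finset.range v, (((v - i) * u).choose u : ℝ) / (v : ℝ) ^ u with hp
  have hvpos : (0:ℝ) < (v:ℝ) ^ (u * v) := by positivity
  have hpG : p = (G : ℝ) / (v : ℝ) ^ (u * v) := by
    rw [hp, Finset.prod_div_distrib, Finset.prod_const, Finset.card_range, ← pow_mul, hG]
    push_cast
    ring
  have hp_pos : 0 < p := by
    rw [hpG]
    have : (0:ℝ) < (G:ℝ) := by exact_mod_cast hGpos
    positivity
  have hp_lt1 : p < 1 := by
    rw [hpG, div_lt_one hvpos]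
    exact_mod_cast hGlt
  set q : ℝ := 1 - p with hq
  have hq_pos : 0 < q := by rw [hq]; linarith
  have hq_lt1 : q < 1 := by rw [hq]; linarith
  have hd_pos : 0 < -Real.log q := by
    have := Real.log_neg hq_pos hq_lt1
    linarith
  set L : ℝ := Real.log (n.choose (u * v)) with hL
  have hC1 : (1:ℝ) ≤ (n.choose (u * v) : ℝ) := by
    exact_mod_cast Nat.choose_pos huv
  set d : ℝ := -Real.log q with hd
  set m : ℕ := ⌊L / d⌋₊ + 1 with hm
  show Spart n u v ≤ m
  have hmgt : L / d < (m : ℝ) := by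
    rw [hm]; push_cast; exact Nat.lt_floor_add_one _
  have hLlt : L < m * d := by
    have := (div_lt_iff₀ hd_pos).mp hmgt
    linarith
  have hCq : (n.choose (u * v) : ℝ) * q ^ m < 1 := by
    have hlog : Real.log ((n.choose (u * v) : ℝ) * q ^ m) < 0 := by
      rw [Real.log_mul (by positivity) (pow_ne_zero _ (ne_of_gt hq_pos)), Real.log_pow]
      have hlq : Real.log q = -d := by rw [hd]; ring
      rw [hlq, ← hL]
      linarith
    have hpos : 0 < (n.choose (u * v) : ℝ) * q ^ m := by positivity
    exact (Real.log_neg_iff hpos).mp hlog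
  have hAle : G * v ^ (n - u * v) ≤ v ^ n := by
    calc G * v ^ (n - u * v) ≤ v ^ (u * v) * v ^ (n - u * v) :=
          Nat.mul_le_mul_right _ (le_of_lt hGlt)
    _ = v ^ n := by rw [← pow_add, Nat.add_sub_cancel' huv]
  have hvn : (v : ℝ) ^ n = (v : ℝ) ^ (u * v) * (v : ℝ) ^ (n - u * v) := by
    rw [← pow_add, Nat.add_sub_cancel' huv]
  have hBq : ((v ^ n - G * v ^ (n - u * v) : ℕ) : ℝ) = q * (v : ℝ) ^ n := by
    rw [Nat.cast_sub hAle]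
    push_cast
    rw [hq, hpG, hvn]
    field_simp
  have hreal : ((n.choose (u * v)) : ℝ) * ((v ^ n - G * v ^ (n - u * v) : ℕ) : ℝ) ^ m
      < (((v : ℝ) ^ n) ^ m) := by
    rw [hBq, mul_pow]
    calc (n.choose (u * v) : ℝ) * (q ^ m * ((v:ℝ) ^ n) ^ m)
        = ((n.choose (u * v) : ℝ) * q ^ m) * ((v:ℝ) ^ n) ^ m := by ring
      _ < 1 * ((v:ℝ) ^ n) ^ m := mul_lt_mul_of_pos_right hCq (by positivity)
      _ = ((v:ℝ) ^ n) ^ m := one_mul _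
  have hnat : (n.choose (u * v)) * (v ^ n - G * v ^ (n - u * v)) ^ m < (v ^ n) ^ m := by
    exact_mod_cast hreal
  exact hSpart_le m (exists_tuple n u v m (by rw [← hG]; exact hnat) huv)
end

section
/- For positive integers r, u, v with v ≥ 2 and r ≥ v−1, the following holds: C(r+2u+1−v, 2u) + Σ_{i=1}^{u} C(r+2u+1−(v+i), 2u−i)·C(v+i−3, i) ≤ C(r+u−1, u) · C(r+u+1−v, u). -/
open Finset

-- factorial as a decreasing product
lemma fact_prod (c : ℕ) : ∏ i ∈ range c, (c - i) = c.factorial := by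
  induction c with
  | zero => simp
  | succ c ih =>
    rw [Finset.prod_range_succ']
    simp only [Nat.succ_sub_succ]
    rw [ih]; simp [Nat.factorial_succ, Nat.mul_comm]

-- splitting bound
lemma splitA (a b c : ℕ) : (a + b + c).choose c ≤ (a + c).choose c * (b + c).choose c := by
  have key : c.factorial * (a + b + c).descFactorial c ≤
      (a + c).descFactorial c * (b + c).descFactorial c := by
    rw [Nat.descFactorial_eq_prod_range, Nat.descFactorial_eq_prod_range,
      Nat.descFactorial_eq_prod_range, ← fact_prod c, ← Finset.prod_mul_distrib,
      ← Finset.prod_mul_distrib]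
    apply Finset.prod_le_prod (fun _ _ => Nat.zero_le _)
    intro i hi
    rw [Finset.mem_range] at hi
    obtain ⟨j, hj, rfl⟩ : ∃ j, 1 ≤ j ∧ c = i + j := ⟨c - i, by omega, by omega⟩
    have h1 : i + j - i = j := by omega
    have h2 : a + b + (i + j) - i = a + b + j := by omega
    have h3 : a + (i + j) - i = a + j := by omega
    have h4 : b + (i + j) - i = b + j := by omega
    rw [h1, h2, h3, h4]
    nlinarith
  rw [Nat.descFactorial_eq_factorial_mul_choose, Nat.descFactorial_eq_factorial_mul_choose,
    Nat.descFactorial_eq_factorial_mul_choose] at key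
  have hpos : 0 < c.factorial * c.factorial := Nat.mul_pos c.factorial_pos c.factorial_pos
  apply Nat.le_of_mul_le_mul_left _ hpos
  calc c.factorial * c.factorial * (a + b + c).choose c
      = c.factorial * (c.factorial * (a + b + c).choose c) := by ring
    _ ≤ c.factorial * (a + c).choose c * (c.factorial * (b + c).choose c) := key
    _ = c.factorial * c.factorial * ((a + c).choose c * (b + c).choose c) := by ring

-- hockey stick
lemma hs (p : ℕ) : ∀ n : ℕ, ∑ i ∈ range (n + 1), (p + i).choose p = (p + n + 1).choose (p + 1) := by
  intro n
  induction n with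
  | zero => simp
  | succ n ih =>
    rw [Finset.sum_range_succ, ih]
    have h2 : p + (n + 1) = p + n + 1 := by omega
    rw [h2]
    have := Nat.choose_succ_succ (p + n + 1) p
    simp only [Nat.succ_eq_add_one] at this
    omega

-- multichoose convolution
lemma conv (p : ℕ) : ∀ q u : ℕ, ∑ i ∈ range (u + 1), (q + i).choose q * (p + (u - i)).choose p
    = (p + q + u + 1).choose (p + q + 1) := by
  intro q
  induction q with
  | zero =>
    intro u
    have : ∀ i ∈ range (u + 1), (0 + i).choose 0 * (p + (u - i)).choose p
        = (p + (u - i)).choose p := by intro i _; simp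
    rw [Finset.sum_congr rfl this]
    have hr := Finset.sum_range_reflect (fun i => (p + i).choose p) (u + 1)
    simp only [Nat.succ_sub_one] at hr
    rw [hr, hs p u]
    norm_num
  | succ q ihq =>
    intro u
    induction u with
    | zero => simp
    | succ u ihu =>
      rw [Finset.sum_range_succ']
      have hstep : ∀ i ∈ range (u + 1),
          (q + 1 + (i + 1)).choose (q + 1) * (p + (u + 1 - (i + 1))).choose p
          = (q + (i + 1)).choose q * (p + (u - i)).choose p
            + (q + 1 + i).choose (q + 1) * (p + (u - i)).choose p := by
        intro i _
        have h1 : u + 1 - (i + 1) = u - i := by omega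
        have h2 : q + 1 + (i + 1) = (q + 1 + i) + 1 := by omega
        rw [h1, h2, Nat.choose_succ_succ (q + 1 + i) q]
        have h3 : q + 1 + i = q + (i + 1) := by omega
        rw [Nat.add_mul, h3]
      rw [Finset.sum_congr rfl hstep, Finset.sum_add_distrib]
      have hA := ihq (u + 1)
      rw [Finset.sum_range_succ'] at hA
      have hB := ihu
      have hP := Nat.choose_succ_succ (p + q + u + 2) (p + q + 1)
      simp only [Nat.choose_self, Nat.choose_zero_right, one_mul, Nat.sub_zero,
        Nat.add_zero, Nat.succ_eq_add_one] at *
      have e6 : p + q + (u + 1) + 1 = p + q + u + 2 := by omega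
      rw [e6] at hA
      have e1 : p + (q + 1) + u + 1 = p + q + u + 2 := by omega
      have e2 : p + (q + 1) + 1 = p + q + 2 := by omega
      have e3 : p + (q + 1) + (u + 1) + 1 = p + q + u + 3 := by omega
      rw [e1, e2] at hB
      rw [e3, e2]
      have e4 : p + q + u + 3 = p + q + u + 2 + 1 := by omega
      have e5 : p + q + 2 = p + q + 1 + 1 := by omega
      rw [e4, e5, hP]
      have e7 : p + q + 1 + 1 = p + q + 2 := by omega
      simp only [e7, Nat.succ_sub_succ] at *
      omega

lemma keylem (s q u : ℕ) :
    ∑ i ∈ range (u + 1), (s + (2 * u - i)).choose s * (q + i).choose q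
      ≤ (s + q + u + 1).choose (s + q + 1) * (s + u).choose s := by
  calc ∑ i ∈ range (u + 1), (s + (2 * u - i)).choose s * (q + i).choose q
      ≤ ∑ i ∈ range (u + 1), ((q + i).choose q * (s + (u - i)).choose s) * (s + u).choose s := by
        apply Finset.sum_le_sum
        intro i hi
        rw [Finset.mem_range] at hi
        have h1 : s + (2 * u - i) = (u - i) + u + s := by omega
        have h2 : (u - i) + s = s + (u - i) := by omega
        have h3 : u + s = s + u := by omega
        calc (s + (2 * u - i)).choose s * (q + i).choose q
            ≤ ((s + (u - i)).choose s * (s + u).choose s) * (q + i).choose q := by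
              apply Nat.mul_le_mul_right
              rw [h1]
              have := splitA (u - i) u s
              rwa [h2, h3] at this
          _ = ((q + i).choose q * (s + (u - i)).choose s) * (s + u).choose s := by ring
    _ = (∑ i ∈ range (u + 1), (q + i).choose q * (s + (u - i)).choose s) * (s + u).choose s := by
        rw [Finset.sum_mul]
    _ = (s + q + u + 1).choose (s + q + 1) * (s + u).choose s := by rw [conv s q u]

theorem stmt14 (r u v : ℕ) (hu : 1 ≤ u) (hv : 2 ≤ v) (hr : v - 1 ≤ r) :
    (r + 2 * u + 1 - v).choose (2 * u) +
        ∑ i ∈ Finset.Icc 1 u, (r + 2 * u + 1 - (v + i)).choose (2 * u - i) * (v + i - 3).choose i ≤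
      (r + u - 1).choose u * (r + u + 1 - v).choose u := by
  obtain ⟨w, rfl⟩ : ∃ w, v = w + 2 := ⟨v - 2, by omega⟩
  obtain ⟨s, rfl⟩ : ∃ s, r = s + w + 1 := ⟨r - w - 1, by omega⟩
  have er1 : s + w + 1 + u - 1 = s + w + u := by omega
  have er2 : s + w + 1 + u + 1 - (w + 2) = s + u := by omega
  have el1 : s + w + 1 + 2 * u + 1 - (w + 2) = s + 2 * u := by omega
  rw [er1, er2, el1]
  have hterm : ∀ i ∈ Finset.Icc 1 u,
      (s + w + 1 + 2 * u + 1 - (w + 2 + i)).choose (2 * u - i) * (w + 2 + i - 3).choose i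
      = (s + (2 * u - i)).choose (2 * u - i) * (w + (i - 1)).choose i := by
    intro i hi
    rw [Finset.mem_Icc] at hi
    have h1 : s + w + 1 + 2 * u + 1 - (w + 2 + i) = s + (2 * u - i) := by omega
    have h2 : w + 2 + i - 3 = w + (i - 1) := by omega
    rw [h1, h2]
  rw [Finset.sum_congr rfl hterm]
  rcases w with _ | q
  · -- w = 0
    have hz : ∀ i ∈ Finset.Icc 1 u,
        (s + (2 * u - i)).choose (2 * u - i) * (0 + (i - 1)).choose i = 0 := by
      intro i hi
      rw [Finset.mem_Icc] at hi
      have : (0 + (i - 1)).choose i = 0 := Nat.choose_eq_zero_of_lt (by omega)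
      rw [this, Nat.mul_zero]
    rw [Finset.sum_congr rfl hz, Finset.sum_const_zero, Nat.add_zero]
    have h1 : s + 2 * u = 2 * u + s := by omega
    have h2 : s + 0 + u = u + s := by omega
    have h3 : s + u = u + s := by omega
    rw [h1, h2, h3, Nat.choose_symm_add, Nat.choose_symm_add]
    have := splitA u u s
    have h4 : u + u + s = 2 * u + s := by omega
    rwa [h4] at this
  · -- w = q + 1
    have hq : ∀ i ∈ Finset.Icc 1 u,
        (s + (2 * u - i)).choose (2 * u - i) * (q + 1 + (i - 1)).choose i
        = (s + (2 * u - i)).choose s * (q + i).choose q := by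
      intro i hi
      rw [Finset.mem_Icc] at hi
      have h1 : q + 1 + (i - 1) = q + i := by omega
      have h2 : s + (2 * u - i) = (2 * u - i) + s := by omega
      have h3 : q + i = i + q := by omega
      rw [h1, h2, Nat.choose_symm_add, h3, Nat.choose_symm_add, ← h2, ← h3]
    rw [Finset.sum_congr rfl hq]
    have hhead : (s + 2 * u).choose (2 * u) = (s + (2 * u - 0)).choose s * (q + 0).choose q := by
      have h2 : s + (2 * u - 0) = 2 * u + s := by omega
      have h3 : s + 2 * u = 2 * u + s := by omega
      rw [h2, h3, Nat.choose_symm_add]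
      simp
    rw [hhead]
    rw [← Finset.Ico_add_one_right_eq_Icc, Finset.sum_Ico_eq_sum_range]
    have hsimp : u + 1 - 1 = u := by omega
    rw [hsimp]
    have hcomb : (s + (2 * u - 0)).choose s * (q + 0).choose q +
        ∑ i ∈ range u, (s + (2 * u - (1 + i))).choose s * (q + (1 + i)).choose q
        = ∑ i ∈ range (u + 1), (s + (2 * u - i)).choose s * (q + i).choose q := by
      rw [Finset.sum_range_succ']
      have : ∀ i ∈ range u, (s + (2 * u - (i + 1))).choose s * (q + (i + 1)).choose q
          = (s + (2 * u - (1 + i))).choose s * (q + (1 + i)).choose q := by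
        intro i _
        congr 2 <;> omega
      rw [Finset.sum_congr rfl this]
      omega
    rw [hcomb]
    calc ∑ i ∈ range (u + 1), (s + (2 * u - i)).choose s * (q + i).choose q
        ≤ (s + q + u + 1).choose (s + q + 1) * (s + u).choose s := keylem s q u
      _ = (s + (q + 1) + u).choose u * (s + u).choose u := by
          have h1 : s + q + u + 1 = (s + q + 1) + u := by omega
          have h2 : (s + u).choose s = (s + u).choose u := Nat.choose_symm_add
          rw [h1, Nat.choose_symm_add, h2]
          have h3 : s + q + 1 + u = s + (q + 1) + u := by omega
          rw [h3]
end

section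
/- Let S = {v_1,…,v_s} be s distinct nonzero vectors in F_2^n with dim(span S) ≥ 2, and let d = dim(span S). Consider the s-partite graph G_S whose j-th vertex part V_j consists of the 2^{d−1} cosets x + ⟨v_j⟩ with x ∈ ⟨S⟩/⟨v_j⟩, with an edge between two cosets (from different parts) iff they intersect as subsets of ⟨S⟩. Then for any nonnegative integers b_1,…,b_s with Σ b_j = 2^{d−2}, G_S has an independent set A with |A ∩ V_j| = b_j for every j. -/
open Finset

lemma aux16 {n s : ℕ} (v : Fin s → (Fin n → ZMod 2)) (d : ℕ)
    (hd : d = Module.finrank (ZMod 2) (Submodule.span (ZMod 2) (Set.range v)))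
    (hd2 : 2 ≤ d)
    (F : Finset ((_ : Fin s) × ℕ)) :
    F.card ≤ 2 ^ (d - 2) →
    ∃ g : ((_ : Fin s) × ℕ) → (Fin n → ZMod 2),
      (∀ t ∈ F, g t ∈ Submodule.span (ZMod 2) (Set.range v)) ∧
      (∀ t₁ ∈ F, ∀ t₂ ∈ F, t₁ ≠ t₂ →
        Disjoint ({g t₁, g t₁ + v t₁.1} : Finset (Fin n → ZMod 2)) {g t₂, g t₂ + v t₂.1}) := by
  classical
  set W : Submodule (ZMod 2) (Fin n → ZMod 2) := Submodule.span (ZMod 2) (Set.range v) with hW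
  have hcardW : Fintype.card W = 2 ^ d := by
    rw [Module.card_eq_pow_finrank (K := ZMod 2) (V := W), ZMod.card, hd]
  induction F using Finset.induction_on with
  | empty => intro _; exact ⟨fun _ => 0, by simp, by simp⟩
  | @insert a F ha IH =>
    intro hcard
    have hF : F.card ≤ 2 ^ (d - 2) := le_trans (by simp [card_insert_of_notMem ha]) hcard
    obtain ⟨g, hg1, hg2⟩ := IH hF
    -- used elements
    set U : Finset (Fin n → ZMod 2) :=
      F.biUnion (fun t => ({g t, g t + v t.1} : Finset (Fin n → ZMod 2))) with hU
    have hUcard : U.card ≤ 2 * F.card := by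
      calc U.card ≤ ∑ t ∈ F, ({g t, g t + v t.1} : Finset (Fin n → ZMod 2)).card :=
            card_biUnion_le
        _ ≤ ∑ _t ∈ F, 2 := Finset.sum_le_sum (fun t _ => card_insert_le _ _ |>.trans (by simp))
        _ = 2 * F.card := by rw [Finset.sum_const]; ring
    -- find a fresh x
    set Wfin : Finset (Fin n → ZMod 2) := (W : Set (Fin n → ZMod 2)).toFinset with hWfin
    have hWfincard : Wfin.card = 2 ^ d := by
      rw [hWfin, Set.toFinset_card]; simpa using hcardW
    have hself : ∀ y : Fin n → ZMod 2, y + y = 0 := by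
      intro y; funext i; simp only [Pi.add_apply, Pi.zero_apply]
      exact CharTwo.add_self_eq_zero (y i)
    have hbad : (Wfin.filter (fun x => x ∈ U ∨ x + v a.1 ∈ U)).card < Wfin.card := by
      have hsub : Wfin.filter (fun x => x ∈ U ∨ x + v a.1 ∈ U) ⊆
          U ∪ U.image (fun y => y + v a.1) := by
        intro x hx
        rcases Finset.mem_filter.mp hx with ⟨-, hx2 | hx2⟩
        · exact Finset.mem_union_left _ hx2
        · refine Finset.mem_union_right _ (Finset.mem_image.mpr ⟨x + v a.1, hx2, ?_⟩)
          rw [add_assoc, hself, add_zero]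
      have h1 : (U ∪ U.image (fun y => y + v a.1)).card ≤ 2 * U.card := by
        refine (Finset.card_union_le _ _).trans ?_
        have := Finset.card_image_le (s := U) (f := fun y => y + v a.1)
        omega
      have h2 : (Wfin.filter (fun x => x ∈ U ∨ x + v a.1 ∈ U)).card ≤ 4 * F.card :=
        (Finset.card_le_card hsub).trans (h1.trans (by omega))
      have hd' : 2 ^ d = 4 * 2 ^ (d - 2) := by
        have hp := pow_add 2 (d - 2) 2
        rw [show d - 2 + 2 = d from by omega] at hp
        omega
      have hFc : F.card + 1 ≤ 2 ^ (d - 2) := by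
        rw [card_insert_of_notMem ha] at hcard; exact hcard
      omega
    obtain ⟨x, hxW, hxgood⟩ : ∃ x ∈ Wfin, ¬(x ∈ U ∨ x + v a.1 ∈ U) := by
      by_contra hcon
      push_neg at hcon
      have : Wfin ⊆ Wfin.filter (fun x => x ∈ U ∨ x + v a.1 ∈ U) := by
        intro x hx; exact Finset.mem_filter.mpr ⟨hx, hcon x hx⟩
      exact absurd (Finset.card_le_card this) (not_le.mpr hbad)
    push_neg at hxgood
    refine ⟨Function.update g a x, ?_, ?_⟩
    · intro t ht
      rcases Finset.mem_insert.mp ht with h | h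
      · rw [h, Function.update_self]; exact Set.mem_toFinset.mp hxW
      · rw [Function.update_of_ne (by intro he; subst he; exact ha h)]
        exact hg1 t h
    · have key : ∀ t ∈ F, Disjoint ({x, x + v a.1} : Finset (Fin n → ZMod 2))
          {g t, g t + v t.1} := by
        intro t ht
        have hginU : g t ∈ U := Finset.mem_biUnion.mpr ⟨t, ht, by simp⟩
        have hginU' : g t + v t.1 ∈ U := Finset.mem_biUnion.mpr ⟨t, ht, by simp⟩
        rw [Finset.disjoint_left]
        intro z hz hz'
        have hzU : z ∈ U := by
          rcases Finset.mem_insert.mp hz' with rfl | hz'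
          · exact hginU
          · simpa using Finset.mem_singleton.mp hz' ▸ hginU'
        rcases Finset.mem_insert.mp hz with rfl | hz
        · exact hxgood.1 hzU
        · exact hxgood.2 (Finset.mem_singleton.mp hz ▸ hzU)
      intro t₁ ht₁ t₂ ht₂ hne
      have hupd : ∀ t ∈ F, Function.update g a x t = g t := fun t ht =>
        Function.update_of_ne (by intro he; subst he; exact ha ht) _ _
      rcases Finset.mem_insert.mp ht₁ with h1 | h1 <;>
        rcases Finset.mem_insert.mp ht₂ with h2 | h2
      · exact absurd (h1.trans h2.symm) hne
      · rw [h1, Function.update_self, hupd t₂ h2]; exact key t₂ h2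
      · rw [h2, Function.update_self, hupd t₁ h1]; exact (key t₁ h1).symm
      · rw [hupd t₁ h1, hupd t₂ h2]; exact hg2 t₁ h1 t₂ h2 hne

/-- Lemma 3: Let `S = {v 0, …, v (s-1)}` be `s` distinct nonzero vectors in `F_2^n` with
`d = dim ⟨S⟩ ≥ 2`.  In the `s`-partite graph `G_S`, whose `j`-th part consists of the cosets
`{x, x + v j}` with `x ∈ ⟨S⟩` and where two cosets from different parts are adjacent iff they
intersect, for any prescribed part sizes `b j` with `∑ b j = 2^{d-2}` there is an independent
set meeting the `j`-th part in exactly `b j` vertices.  An independent set with `|A ∩ V_j| = b j`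
is encoded as a family `C j` of `b j` cosets of the form `{x, x + v j}` with `x ∈ ⟨S⟩`, such
that cosets chosen from different parts are pairwise disjoint. -/
theorem stmt16 (n s : ℕ) (v : Fin s → (Fin n → ZMod 2))
    (hinj : Function.Injective v) (hne : ∀ j, v j ≠ 0)
    (d : ℕ) (hd : d = Module.finrank (ZMod 2) (Submodule.span (ZMod 2) (Set.range v)))
    (hd2 : 2 ≤ d)
    (b : Fin s → ℕ) (hb : ∑ j, b j = 2 ^ (d - 2)) :
    ∃ C : Fin s → Finset (Finset (Fin n → ZMod 2)),
      (∀ j, (C j).card = b j) ∧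
      (∀ j, ∀ c ∈ C j, ∃ x ∈ Submodule.span (ZMod 2) (Set.range v),
        c = ({x, x + v j} : Finset (Fin n → ZMod 2))) ∧
      (∀ j₁ j₂, j₁ ≠ j₂ → ∀ c₁ ∈ C j₁, ∀ c₂ ∈ C j₂, Disjoint c₁ c₂) := by
  classical
  set F : Finset ((_ : Fin s) × ℕ) := Finset.univ.sigma (fun j => Finset.range (b j)) with hF
  have hmemF : ∀ j i, i < b j → (⟨j, i⟩ : (_ : Fin s) × ℕ) ∈ F := by
    intro j i hi
    simp [hF, Finset.mem_sigma, Finset.mem_range, hi]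
  have hFcard : F.card = 2 ^ (d - 2) := by
    rw [hF, Finset.card_sigma]; simpa using hb
  obtain ⟨g, hg1, hg2⟩ := aux16 v d hd hd2 F (le_of_eq hFcard)
  refine ⟨fun j => (Finset.range (b j)).image
    (fun i => ({g ⟨j, i⟩, g ⟨j, i⟩ + v j} : Finset (Fin n → ZMod 2))), ?_, ?_, ?_⟩
  · intro j
    rw [Finset.card_image_of_injOn, Finset.card_range]
    intro i hi i' hi' hii
    by_contra hne'
    have hd12 : Disjoint ({g ⟨j, i⟩, g ⟨j, i⟩ + v j} : Finset (Fin n → ZMod 2))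
        {g ⟨j, i'⟩, g ⟨j, i'⟩ + v j} := by
      have := hg2 ⟨j, i⟩ (hmemF j i (Finset.mem_range.mp hi))
        ⟨j, i'⟩ (hmemF j i' (Finset.mem_range.mp hi')) (by simp [hne'])
      simpa using this
    simp only at hii
    rw [hii] at hd12
    have : ({g ⟨j, i'⟩, g ⟨j, i'⟩ + v j} : Finset (Fin n → ZMod 2)) = ⊥ :=
      disjoint_self.mp hd12
    simpa using this
  · intro j c hc
    obtain ⟨i, hi, rfl⟩ := Finset.mem_image.mp hc
    exact ⟨g ⟨j, i⟩, hg1 _ (hmemF j i (Finset.mem_range.mp hi)), rfl⟩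
  · intro j₁ j₂ hj c₁ hc₁ c₂ hc₂
    obtain ⟨i₁, hi₁, rfl⟩ := Finset.mem_image.mp hc₁
    obtain ⟨i₂, hi₂, rfl⟩ := Finset.mem_image.mp hc₂
    have := hg2 ⟨j₁, i₁⟩ (hmemF j₁ i₁ (Finset.mem_range.mp hi₁))
      ⟨j₂, i₂⟩ (hmemF j₂ i₂ (Finset.mem_range.mp hi₂)) (by simp [hj])
    simpa using this
end
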